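/- For all real x with 0 < |x| < π/2, one has 2x/sin x + x/tan x < 3 + ((8π−24)/π³)·x³·sin x. -/

import Mathlib

open Real

private lemma nonneg_of_deriv_aux {f f' : ℝ → ℝ} (h0 : f 0 = 0)
    (hd : ∀ y, HasDerivAt f (f' y) y) (h' : ∀ y, 0 ≤ y → 0 ≤ f' y)
    {x : ℝ} (hx : 0 ≤ x) : 0 ≤ f x := by
  have hdiff : Differentiable ℝ f := fun y => (hd y).differentiableAt
  have hmono : MonotoneOn f (Set.Ici 0) := by
    apply monotoneOn_of_deriv_nonneg (convex_Ici 0) hdiff.continuous.continuousOn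
      hdiff.differentiableOn
    intro y hy
    rw [interior_Ici] at hy
    rw [(hd y).deriv]
    exact h' y (le_of_lt hy)
  have := hmono Set.self_mem_Ici hx hx
  rwa [h0] at this

private lemma sin_ge_taylor3 {x : ℝ} (hx : 0 ≤ x) : x - x ^ 3 / 6 ≤ Real.sin x := by
  have h := nonneg_of_deriv_aux (f := fun y => Real.sin y - (y - y ^ 3 / 6))
      (f' := fun y => Real.cos y - (1 - y ^ 2 / 2)) (by norm_num)
      (fun y => by
        have h2 : HasDerivAt (fun z : ℝ => z - z ^ 3 / 6) (1 - y ^ 2 / 2) y := by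
          have h3 := (hasDerivAt_id y).sub ((hasDerivAt_pow 3 y).div_const 6)
          convert h3 using 1 <;> try rfl
          push_cast; ring
        exact (Real.hasDerivAt_sin y).sub h2)
      (fun y _ => by nlinarith [Real.one_sub_sq_div_two_le_cos (x := y)]) hx
  linarith [h]

private lemma cos_le_taylor4 {x : ℝ} (hx : 0 ≤ x) :
    Real.cos x ≤ 1 - x ^ 2 / 2 + x ^ 4 / 24 := by
  have h := nonneg_of_deriv_aux (f := fun y => 1 - y ^ 2 / 2 + y ^ 4 / 24 - Real.cos y)
      (f' := fun y => Real.sin y - (y - y ^ 3 / 6)) (by norm_num)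
      (fun y => by
        have h2 : HasDerivAt (fun z : ℝ => 1 - z ^ 2 / 2 + z ^ 4 / 24)
            (-(y - y ^ 3 / 6)) y := by
          have h3 := ((hasDerivAt_const y (1:ℝ)).sub ((hasDerivAt_pow 2 y).div_const 2)).add
            ((hasDerivAt_pow 4 y).div_const 24)
          convert h3 using 1 <;> try rfl
          push_cast; ring
        have h4 := h2.sub (Real.hasDerivAt_cos y)
        convert h4 using 1 <;> try rfl
        ring)
      (fun y hy => by nlinarith [sin_ge_taylor3 hy]) hx
  linarith [h]

private lemma sin_le_taylor5 {x : ℝ} (hx : 0 ≤ x) :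
    Real.sin x ≤ x - x ^ 3 / 6 + x ^ 5 / 120 := by
  have h := nonneg_of_deriv_aux
      (f := fun y => y - y ^ 3 / 6 + y ^ 5 / 120 - Real.sin y)
      (f' := fun y => 1 - y ^ 2 / 2 + y ^ 4 / 24 - Real.cos y) (by norm_num)
      (fun y => by
        have h2 : HasDerivAt (fun z : ℝ => z - z ^ 3 / 6 + z ^ 5 / 120)
            (1 - y ^ 2 / 2 + y ^ 4 / 24) y := by
          have h3 := ((hasDerivAt_id y).sub ((hasDerivAt_pow 3 y).div_const 6)).add
            ((hasDerivAt_pow 5 y).div_const 120)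
          convert h3 using 1 <;> try rfl
          push_cast; ring
        exact h2.sub (Real.hasDerivAt_sin y))
      (fun y hy => by nlinarith [cos_le_taylor4 hy]) hx
  linarith [h]

private lemma cos_ge_taylor6 {x : ℝ} (hx : 0 ≤ x) :
    1 - x ^ 2 / 2 + x ^ 4 / 24 - x ^ 6 / 720 ≤ Real.cos x := by
  have h := nonneg_of_deriv_aux
      (f := fun y => Real.cos y - (1 - y ^ 2 / 2 + y ^ 4 / 24 - y ^ 6 / 720))
      (f' := fun y => y - y ^ 3 / 6 + y ^ 5 / 120 - Real.sin y) (by norm_num)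
      (fun y => by
        have h2 : HasDerivAt (fun z : ℝ => 1 - z ^ 2 / 2 + z ^ 4 / 24 - z ^ 6 / 720)
            (-(y - y ^ 3 / 6 + y ^ 5 / 120)) y := by
          have h3 := (((hasDerivAt_const y (1:ℝ)).sub ((hasDerivAt_pow 2 y).div_const 2)).add
            ((hasDerivAt_pow 4 y).div_const 24)).sub ((hasDerivAt_pow 6 y).div_const 720)
          convert h3 using 1 <;> try rfl
          push_cast; ring
        have h4 := (Real.hasDerivAt_cos y).sub h2
        convert h4 using 1 <;> try rfl
        ring)
      (fun y hy => by nlinarith [sin_le_taylor5 hy]) hx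
  linarith [h]

private lemma sin_ge_taylor7 {x : ℝ} (hx : 0 ≤ x) :
    x - x ^ 3 / 6 + x ^ 5 / 120 - x ^ 7 / 5040 ≤ Real.sin x := by
  have h := nonneg_of_deriv_aux
      (f := fun y => Real.sin y - (y - y ^ 3 / 6 + y ^ 5 / 120 - y ^ 7 / 5040))
      (f' := fun y => Real.cos y - (1 - y ^ 2 / 2 + y ^ 4 / 24 - y ^ 6 / 720)) (by norm_num)
      (fun y => by
        have h2 : HasDerivAt (fun z : ℝ => z - z ^ 3 / 6 + z ^ 5 / 120 - z ^ 7 / 5040)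
            (1 - y ^ 2 / 2 + y ^ 4 / 24 - y ^ 6 / 720) y := by
          have h3 := (((hasDerivAt_id y).sub ((hasDerivAt_pow 3 y).div_const 6)).add
            ((hasDerivAt_pow 5 y).div_const 120)).sub ((hasDerivAt_pow 7 y).div_const 5040)
          convert h3 using 1 <;> try rfl
          push_cast; ring
        exact (Real.hasDerivAt_sin y).sub h2)
      (fun y hy => by nlinarith [cos_ge_taylor6 hy]) hx
  linarith [h]

private lemma cos_le_taylor8 {x : ℝ} (hx : 0 ≤ x) :
    Real.cos x ≤ 1 - x ^ 2 / 2 + x ^ 4 / 24 - x ^ 6 / 720 + x ^ 8 / 40320 := by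
  have h := nonneg_of_deriv_aux
      (f := fun y => 1 - y ^ 2 / 2 + y ^ 4 / 24 - y ^ 6 / 720 + y ^ 8 / 40320 - Real.cos y)
      (f' := fun y => Real.sin y - (y - y ^ 3 / 6 + y ^ 5 / 120 - y ^ 7 / 5040)) (by norm_num)
      (fun y => by
        have h2 : HasDerivAt
            (fun z : ℝ => 1 - z ^ 2 / 2 + z ^ 4 / 24 - z ^ 6 / 720 + z ^ 8 / 40320)
            (-(y - y ^ 3 / 6 + y ^ 5 / 120 - y ^ 7 / 5040)) y := by
          have h3 := ((((hasDerivAt_const y (1:ℝ)).sub ((hasDerivAt_pow 2 y).div_const 2)).add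
            ((hasDerivAt_pow 4 y).div_const 24)).sub ((hasDerivAt_pow 6 y).div_const 720)).add
            ((hasDerivAt_pow 8 y).div_const 40320)
          convert h3 using 1 <;> try rfl
          push_cast; ring
        have h4 := h2.sub (Real.hasDerivAt_cos y)
        convert h4 using 1 <;> try rfl
        ring)
      (fun y hy => by nlinarith [sin_ge_taylor7 hy]) hx
  linarith [h]

private lemma pi_cube_lt : π ^ 3 < 31.0062870 := by
  have hπu : π < 3.141593 := by linarith [Real.pi_lt_d6]
  have h := pow_lt_pow_left₀ hπu Real.pi_pos.le (n := 3) (by norm_num)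
  have h2 : (3.141593:ℝ) ^ 3 < 31.0062870 := by norm_num
  linarith

private lemma lt_pi_cube : (31.0062573:ℝ) < π ^ 3 := by
  have hπl : (3.141592:ℝ) < π := by linarith [Real.pi_gt_d6]
  have h := pow_lt_pow_left₀ hπl (by norm_num) (n := 3) (by norm_num)
  have h2 : (31.0062573:ℝ) < 3.141592 ^ 3 := by norm_num
  linarith

set_option maxHeartbeats 2000000 in
private lemma deriv_neg_t (t : ℝ) (ht0 : 0 < t) (ht1 : t ≤ 0.171) :
    2 * Real.sin t - 2 + (π / 2 - t) * Real.cos t + (8 * π - 24) / π ^ 3 *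
      (3 * (π / 2 - t) ^ 2 * Real.cos t ^ 2 +
        (π / 2 - t) ^ 3 * (2 * Real.cos t * Real.sin t)) < 0 := by
  have hπl : (3.141592 : ℝ) < π := by linarith [Real.pi_gt_d6]
  have hπu : π < 3.141593 := by linarith [Real.pi_lt_d6]
  have hπ3 : (0:ℝ) < π ^ 3 := by positivity
  have hS0 : 0 ≤ Real.sin t := (Real.sin_pos_of_pos_of_lt_pi ht0 (by linarith)).le
  have hC0 : 0 ≤ Real.cos t := (Real.cos_pos_of_mem_Ioo ⟨by linarith, by linarith⟩).le
  have hSle : Real.sin t ≤ t := Real.sin_le ht0.le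
  have hCle : Real.cos t ≤ 1 - t ^ 2 / 2 + t ^ 4 / 24 := cos_le_taylor4 ht0.le
  have hC1 : Real.cos t ≤ 1 := Real.cos_le_one t
  have hw0 : 0 < π / 2 - t := by linarith
  have hwb : π / 2 - t ≤ 1.5707965 - t := by linarith
  have hT1 : 2 * Real.sin t ≤ 2 * t := by linarith
  have hT2 : (π / 2 - t) * Real.cos t ≤ (1.5707965 - t) * (1 - t ^ 2 / 2 + t ^ 4 / 24) :=
    mul_le_mul hwb hCle hC0 (by linarith)
  have hsq2 : (π / 2 - t) ^ 2 ≤ (1.5707965 - t) ^ 2 := pow_le_pow_left₀ hw0.le hwb 2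
  have hsq3 : (π / 2 - t) ^ 3 ≤ (1.5707965 - t) ^ 3 := pow_le_pow_left₀ hw0.le hwb 3
  have hC2 : Real.cos t ^ 2 ≤ 1 := Real.cos_sq_le_one t
  have hCS : Real.cos t * Real.sin t ≤ t := by
    linarith [mul_le_mul hC1 hSle hS0 zero_le_one]
  have hA1 : 3 * (π / 2 - t) ^ 2 * Real.cos t ^ 2 ≤ 3 * (π / 2 - t) ^ 2 := by
    nlinarith [sq_nonneg (π / 2 - t)]
  have hA2 : 3 * (π / 2 - t) ^ 2 ≤ 3 * (1.5707965 - t) ^ 2 := by linarith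
  have hB1 : (π / 2 - t) ^ 3 * (2 * Real.cos t * Real.sin t) ≤ (π / 2 - t) ^ 3 * (2 * t) :=
    mul_le_mul_of_nonneg_left (by linarith) (pow_nonneg hw0.le 3)
  have hB2 : (π / 2 - t) ^ 3 * (2 * t) ≤ (1.5707965 - t) ^ 3 * (2 * t) :=
    mul_le_mul_of_nonneg_right hsq3 (by linarith)
  have hbrU : 3 * (π / 2 - t) ^ 2 * Real.cos t ^ 2 +
      (π / 2 - t) ^ 3 * (2 * Real.cos t * Real.sin t) ≤
      3 * (1.5707965 - t) ^ 2 + 2 * (1.5707965 - t) ^ 3 * t := by linarith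
  have hbr0 : 0 ≤ 3 * (π / 2 - t) ^ 2 * Real.cos t ^ 2 +
      (π / 2 - t) ^ 3 * (2 * Real.cos t * Real.sin t) := by
    have hx1 : (0:ℝ) ≤ 3 * (π / 2 - t) ^ 2 * Real.cos t ^ 2 := by positivity
    have hx2 : (0:ℝ) ≤ (π / 2 - t) ^ 3 * (2 * Real.cos t * Real.sin t) :=
      mul_nonneg (pow_nonneg hw0.le 3) (mul_nonneg (mul_nonneg (by norm_num) hC0) hS0)
    linarith
  have hCU : (8 * π - 24) / π ^ 3 ≤ 0.0365328 := by
    rw [div_le_iff₀ hπ3]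
    nlinarith [lt_pi_cube]
  have hCc := mul_le_mul hCU hbrU hbr0 (by norm_num)
  have hfin : 2 * t - 2 + (1.5707965 - t) * (1 - t ^ 2 / 2 + t ^ 4 / 24) +
      0.0365328 * (3 * (1.5707965 - t) ^ 2 + 2 * (1.5707965 - t) ^ 3 * t) < 0 := by
    nlinarith [mul_nonneg (sub_nonneg.2 ht1) ht0.le, sq_nonneg t,
      mul_nonneg (mul_nonneg (sub_nonneg.2 ht1) ht0.le) ht0.le,
      mul_nonneg (mul_nonneg (mul_nonneg (sub_nonneg.2 ht1) ht0.le) ht0.le) ht0.le,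
      mul_nonneg (mul_nonneg (mul_nonneg (mul_nonneg (sub_nonneg.2 ht1) ht0.le) ht0.le) ht0.le)
        ht0.le]
  linarith [hT1, hT2, hCc, hfin]

set_option maxHeartbeats 2000000 in
private lemma huygens_anti : StrictAntiOn
    (fun y => 3 * Real.sin y + (8 * π - 24) / π ^ 3 * y ^ 3 * Real.sin y ^ 2
      - 2 * y - y * Real.cos y) (Set.Icc 1.4 (π / 2)) := by
  apply strictAntiOn_of_deriv_neg (convex_Icc _ _)
  · apply Continuous.continuousOn
    fun_prop
  · intro y hy
    rw [interior_Icc, Set.mem_Ioo] at hy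
    obtain ⟨hy1, hy2⟩ := hy
    have hd : HasDerivAt
        (fun y => 3 * Real.sin y + (8 * π - 24) / π ^ 3 * y ^ 3 * Real.sin y ^ 2
          - 2 * y - y * Real.cos y)
        (2 * Real.cos y - 2 + y * Real.sin y + (8 * π - 24) / π ^ 3 *
          (3 * y ^ 2 * Real.sin y ^ 2 + y ^ 3 * (2 * Real.sin y * Real.cos y))) y := by
      have h1 := (Real.hasDerivAt_sin y).const_mul (3:ℝ)
      have h2 := ((hasDerivAt_pow 3 y).const_mul ((8 * π - 24) / π ^ 3)).mul
        ((Real.hasDerivAt_sin y).pow 2)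
      have h4 := (hasDerivAt_id y).const_mul (2:ℝ)
      have h5 := (hasDerivAt_id y).mul (Real.hasDerivAt_cos y)
      have h6 := ((h1.add h2).sub h4).sub h5
      convert h6 using 1 <;> try rfl
      simp only [id_eq, Pi.pow_apply]
      push_cast; ring
    rw [hd.deriv]
    have hπu : π < 3.141593 := by linarith [Real.pi_lt_d6]
    have ht0 : 0 < π / 2 - y := by linarith
    have ht1 : π / 2 - y ≤ 0.171 := by linarith
    have h := deriv_neg_t (π / 2 - y) ht0 ht1
    rw [Real.sin_pi_div_two_sub, Real.cos_pi_div_two_sub] at h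
    have e : π / 2 - (π / 2 - y) = y := by ring
    rw [e] at h
    linarith [h]

set_option maxHeartbeats 2000000 in
private lemma huygens_key (x : ℝ) (hx0 : 0 < x) (hx2 : x < π / 2) :
    2 * x / Real.sin x + x / Real.tan x < 3 + ((8 * π - 24) / π ^ 3) * x ^ 3 * Real.sin x := by
  have hπl : (3.141592 : ℝ) < π := by linarith [Real.pi_gt_d6]
  have hπu : π < 3.141593 := by linarith [Real.pi_lt_d6]
  have hs : 0 < Real.sin x := Real.sin_pos_of_pos_of_lt_pi hx0 (by linarith)
  have hπ3 : (0:ℝ) < π ^ 3 := by positivity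
  have hmain : 2 * x + x * Real.cos x <
      3 * Real.sin x + (8 * π - 24) / π ^ 3 * x ^ 3 * Real.sin x ^ 2 := by
    rcases le_or_gt x 1.4 with hx14 | hx14
    · -- small x : polynomial Taylor bounds
      have hkc : (0.036532 : ℝ) < (8 * π - 24) / π ^ 3 := by
        rw [lt_div_iff₀ hπ3]
        nlinarith [pi_cube_lt]
      have hu0 : 0 < x ^ 2 := by positivity
      have hu1 : x ^ 2 ≤ 1.96 := by nlinarith
      have ha2 : x ^ 7 ≤ 1.96 * x ^ 5 := by
        nlinarith [mul_nonneg (sub_nonneg.2 hu1) (pow_pos hx0 5).le]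
      have ha1 : x ^ 3 ≤ 1.96 * x := by
        nlinarith [mul_nonneg (sub_nonneg.2 hu1) hx0.le]
      have hL0 : 0 ≤ x - x ^ 3 / 6 + x ^ 5 / 120 - x ^ 7 / 5040 := by
        nlinarith [pow_pos hx0 5, ha1, ha2]
      have hs7 := sin_ge_taylor7 hx0.le
      have hc8 := cos_le_taylor8 hx0.le
      have hsq : (x - x ^ 3 / 6 + x ^ 5 / 120 - x ^ 7 / 5040) ^ 2 ≤ Real.sin x ^ 2 := by
        nlinarith [hs7, hL0]
      have hq : (1:ℝ) / 60 - x ^ 2 / 1260 + (x ^ 2) ^ 2 / 40320 <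
          0.036532 * (1 - x ^ 2 / 6 + (x ^ 2) ^ 2 / 120 - (x ^ 2) ^ 3 / 5040) ^ 2 := by
        nlinarith [mul_nonneg (sub_nonneg.2 hu1) hu0.le,
          mul_nonneg (mul_nonneg (sub_nonneg.2 hu1) hu0.le) hu0.le,
          mul_nonneg (mul_nonneg (mul_nonneg (sub_nonneg.2 hu1) hu0.le) hu0.le) hu0.le,
          mul_nonneg (mul_nonneg (mul_nonneg (mul_nonneg (sub_nonneg.2 hu1) hu0.le) hu0.le)
            hu0.le) hu0.le,
          mul_nonneg (mul_nonneg (mul_nonneg (mul_nonneg (mul_nonneg (sub_nonneg.2 hu1)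
            hu0.le) hu0.le) hu0.le) hu0.le) hu0.le,
          sq_nonneg (x ^ 2 - 1.96), sq_nonneg (x ^ 2), hu0.le]
      have h5 : (0:ℝ) < x ^ 5 := by positivity
      have hmul := mul_lt_mul_of_pos_left hq h5
      have hpoly : 2 * x + x * (1 - x ^ 2 / 2 + x ^ 4 / 24 - x ^ 6 / 720 + x ^ 8 / 40320) <
          3 * (x - x ^ 3 / 6 + x ^ 5 / 120 - x ^ 7 / 5040) +
            0.036532 * x ^ 3 * (x - x ^ 3 / 6 + x ^ 5 / 120 - x ^ 7 / 5040) ^ 2 := by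
        nlinarith [hmul]
      have hb1 : x * Real.cos x ≤
          x * (1 - x ^ 2 / 2 + x ^ 4 / 24 - x ^ 6 / 720 + x ^ 8 / 40320) :=
        mul_le_mul_of_nonneg_left hc8 hx0.le
      have hb2 : 0.036532 * x ^ 3 * (x - x ^ 3 / 6 + x ^ 5 / 120 - x ^ 7 / 5040) ^ 2 ≤
          0.036532 * x ^ 3 * Real.sin x ^ 2 := by
        have hpos : (0:ℝ) ≤ 0.036532 * x ^ 3 := by positivity
        exact mul_le_mul_of_nonneg_left hsq hpos
      have hb3 : 0.036532 * x ^ 3 * Real.sin x ^ 2 ≤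
          (8 * π - 24) / π ^ 3 * x ^ 3 * Real.sin x ^ 2 := by
        have h0 : (0:ℝ) ≤ x ^ 3 * Real.sin x ^ 2 := by positivity
        nlinarith [mul_le_mul_of_nonneg_right hkc.le h0]
      nlinarith [hs7, hb1, hb2, hb3, hpoly]
    · -- large x : strict antitonicity down to the endpoint π/2
      have hmem1 : x ∈ Set.Icc (1.4:ℝ) (π / 2) := ⟨hx14.le, hx2.le⟩
      have hmem2 : π / 2 ∈ Set.Icc (1.4:ℝ) (π / 2) := ⟨by linarith, le_refl _⟩
      have h : 3 * Real.sin (π / 2) + (8 * π - 24) / π ^ 3 * (π / 2) ^ 3 *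
            Real.sin (π / 2) ^ 2 - 2 * (π / 2) - π / 2 * Real.cos (π / 2) <
          3 * Real.sin x + (8 * π - 24) / π ^ 3 * x ^ 3 * Real.sin x ^ 2
            - 2 * x - x * Real.cos x :=
        huygens_anti hmem1 hmem2 hx2
      have hval : 3 * Real.sin (π / 2) + (8 * π - 24) / π ^ 3 * (π / 2) ^ 3 *
          Real.sin (π / 2) ^ 2 - 2 * (π / 2) - π / 2 * Real.cos (π / 2) = 0 := by
        rw [Real.sin_pi_div_two, Real.cos_pi_div_two]
        have hπ0 : π ≠ 0 := by positivity
        field_simp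
        ring
      nlinarith [h, hval]
  rw [Real.tan_eq_sin_div_cos, div_div_eq_mul_div, ← add_div, div_lt_iff₀ hs]
  nlinarith [hmain]

theorem huygens_upper (x : ℝ) (h1 : 0 < |x|) (h2 : |x| < π / 2) :
    2 * x / Real.sin x + x / Real.tan x < 3 + ((8 * π - 24) / π ^ 3) * x ^ 3 * Real.sin x := by
  rcases lt_or_ge x 0 with hneg | hpos
  · have hx2 : -x < π / 2 := by rwa [abs_of_neg hneg] at h2
    have h := huygens_key (-x) (by linarith) hx2
    have e1 : 2 * (-x) / Real.sin (-x) = 2 * x / Real.sin x := by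
      rw [Real.sin_neg]; ring
    have e2 : (-x) / Real.tan (-x) = x / Real.tan x := by
      rw [Real.tan_neg]; ring
    have e3 : (8 * π - 24) / π ^ 3 * (-x) ^ 3 * Real.sin (-x) =
        (8 * π - 24) / π ^ 3 * x ^ 3 * Real.sin x := by
      rw [Real.sin_neg]; ring
    rwa [e1, e2, e3] at h
  · have hx0 : 0 < x := hpos.lt_of_ne (Ne.symm (abs_pos.mp h1))
    exact huygens_key x hx0 (by rwa [abs_of_pos hx0] at h2)
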